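/- Let B : ℝ^d → ℝ^k be a linear map with rows b_1, …, b_k ∈ ℝ^d, i.e. (B e)_m = ⟨b_m, e⟩ for all e ∈ ℝ^d and all m. Then for every 1 ≤ p < ∞ the p-nuclear norm of B satisfies (Σ_{m=1}^k ‖b_m‖^p)^{1/p} ≤ ν_p(B) ≤ Σ_{m=1}^k ‖b_m‖. -/

import Mathlib

open Finset
open scoped RealInnerProductSpace

/-- The ℓᵖ norm on `ℝᵏ`, for `1 ≤ p < ∞`. -/
noncomputable def lpNorm (k : ℕ) (p : ℝ) (z : Fin k → ℝ) : ℝ :=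
    (∑ j, |z j| ^ p) ^ (1 / p)

/-- The `p`-nuclear norm of a linear map `A : ℝ^d → ℝ^k`:
the infimum of `∑ i ‖z i‖_p ‖v i‖` over all finite decompositions
`A e = ∑ i ⟪v i, e⟫ • z i`. -/
noncomputable def nuclearNorm (d k : ℕ) (p : ℝ)
    (A : EuclideanSpace ℝ (Fin d) →ₗ[ℝ] (Fin k → ℝ)) : ℝ :=
  sInf { s : ℝ | ∃ (l : ℕ) (z : Fin l → Fin k → ℝ)
      (v : Fin l → EuclideanSpace ℝ (Fin d)),
    (∀ e, A e = ∑ i, ⟪v i, e⟫ • z i) ∧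
    s = ∑ i, lpNorm k p (z i) * ‖v i‖ }

/-- Iterated Minkowski inequality for finite sums. -/
lemma Lp_sum_le_aux {k : ℕ} {p : ℝ} (hp : 1 ≤ p) {l : ℕ} (s : Finset (Fin l))
    (F : Fin l → Fin k → ℝ) (hF : ∀ i m, 0 ≤ F i m) :
    (∑ m, (∑ i ∈ s, F i m) ^ p) ^ (1 / p) ≤
      ∑ i ∈ s, (∑ m, (F i m) ^ p) ^ (1 / p) := by
  have hp0 : p ≠ 0 := by positivity
  induction s using Finset.induction with
  | empty =>
      simp [Real.zero_rpow hp0, Real.zero_rpow (inv_ne_zero hp0)]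
  | insert _ _ hnm ih =>
      rename_i a t
      rw [Finset.sum_insert hnm]
      calc (∑ m, (∑ i ∈ insert a t, F i m) ^ p) ^ (1 / p)
          = (∑ m, (F a m + ∑ i ∈ t, F i m) ^ p) ^ (1 / p) := by
            simp [Finset.sum_insert hnm]
        _ ≤ (∑ m, (F a m) ^ p) ^ (1 / p) + (∑ m, (∑ i ∈ t, F i m) ^ p) ^ (1 / p) :=
            Real.Lp_add_le_of_nonneg Finset.univ hp (fun m _ => hF a m)
              (fun m _ => Finset.sum_nonneg fun i _ => hF i m)
        _ ≤ (∑ m, (F a m) ^ p) ^ (1 / p) + ∑ i ∈ t, (∑ m, (F i m) ^ p) ^ (1 / p) :=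
            add_le_add_right ih _

/-- If `B : ℝ^d → ℝ^k` is the linear map with rows
`b_1, …, b_k`, then `(∑ m ‖b m‖^p)^(1/p) ≤ ν_p(B) ≤ ∑ m ‖b m‖`
for every `1 ≤ p < ∞`. -/
theorem nuclearNorm_rows_bounds (d k : ℕ) (hd : 1 ≤ d) (hk : 1 ≤ k)
    (p : ℝ) (hp : 1 ≤ p)
    (B : EuclideanSpace ℝ (Fin d) →ₗ[ℝ] (Fin k → ℝ))
    (b : Fin k → EuclideanSpace ℝ (Fin d))
    (hB : ∀ (e : EuclideanSpace ℝ (Fin d)) (m : Fin k), B e m = ⟪b m, e⟫) :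
    (∑ m, ‖b m‖ ^ p) ^ (1 / p) ≤ nuclearNorm d k p B ∧
      nuclearNorm d k p B ≤ ∑ m, ‖b m‖ := by
  have hp0 : 0 < p := lt_of_lt_of_le zero_lt_one hp
  have hp0' : p ≠ 0 := hp0.ne'
  -- witness for the upper bound
  have hmem : (∑ m, ‖b m‖ : ℝ) ∈ { s : ℝ | ∃ (l : ℕ) (z : Fin l → Fin k → ℝ)
      (v : Fin l → EuclideanSpace ℝ (Fin d)),
      (∀ e, B e = ∑ i, ⟪v i, e⟫ • z i) ∧
      s = ∑ i, lpNorm k p (z i) * ‖v i‖ } := by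
    refine ⟨k, fun i => Pi.single i 1, b, ?_, ?_⟩
    · intro e
      funext m
      rw [hB e m]
      simp only [Finset.sum_apply, Pi.smul_apply]
      rw [Finset.sum_eq_single m]
      · simp
      · intro i _ hi
        simp [Pi.single_apply, hi]
      · simp
    · congr 1
      funext i
      have : lpNorm k p (Pi.single i 1) = 1 := by
        unfold lpNorm
        rw [Finset.sum_eq_single i]
        · simp [Real.one_rpow]
        · intro j _ hj
          simp [Pi.single_apply, hj, Real.zero_rpow hp0']
        · simp
      rw [this, one_mul]
  have hbdd : BddBelow { s : ℝ | ∃ (l : ℕ) (z : Fin l → Fin k → ℝ)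
      (v : Fin l → EuclideanSpace ℝ (Fin d)),
      (∀ e, B e = ∑ i, ⟪v i, e⟫ • z i) ∧
      s = ∑ i, lpNorm k p (z i) * ‖v i‖ } := by
    refine ⟨0, fun s hs => ?_⟩
    obtain ⟨l, z, v, -, rfl⟩ := hs
    apply Finset.sum_nonneg
    intro i _
    apply mul_nonneg _ (norm_nonneg _)
    apply Real.rpow_nonneg
    apply Finset.sum_nonneg
    intro j _
    exact Real.rpow_nonneg (abs_nonneg _) _
  constructor
  · -- lower bound
    apply le_csInf ⟨_, hmem⟩
    rintro s ⟨l, z, v, hdec, rfl⟩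
    -- rows satisfy b m = ∑ i, z i m • v i
    have hrow : ∀ m, b m = ∑ i, z i m • v i := by
      intro m
      apply ext_inner_right ℝ
      intro e
      rw [← hB e m, hdec e, sum_inner]
      simp only [real_inner_smul_left, Finset.sum_apply, Pi.smul_apply, smul_eq_mul]
      exact Finset.sum_congr rfl fun i _ => mul_comm _ _
    have hnorm : ∀ m, ‖b m‖ ≤ ∑ i, |z i m| * ‖v i‖ := by
      intro m
      rw [hrow m]
      refine (norm_sum_le _ _).trans_eq ?_
      exact Finset.sum_congr rfl fun i _ => by rw [norm_smul, Real.norm_eq_abs]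
    calc (∑ m, ‖b m‖ ^ p) ^ (1 / p)
        ≤ (∑ m, (∑ i, |z i m| * ‖v i‖) ^ p) ^ (1 / p) := by
          apply Real.rpow_le_rpow (Finset.sum_nonneg fun m _ =>
            Real.rpow_nonneg (norm_nonneg _) _) _ (by positivity)
          apply Finset.sum_le_sum
          intro m _
          exact Real.rpow_le_rpow (norm_nonneg _) (hnorm m) hp0.le
      _ ≤ ∑ i, (∑ m, (|z i m| * ‖v i‖) ^ p) ^ (1 / p) :=
          Lp_sum_le_aux hp Finset.univ _ (fun i m => by positivity)
      _ = ∑ i, lpNorm k p (z i) * ‖v i‖ := by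
          refine Finset.sum_congr rfl fun i _ => ?_
          unfold lpNorm
          rw [show (∑ m, (|z i m| * ‖v i‖) ^ p) = (∑ m, |z i m| ^ p) * ‖v i‖ ^ p by
            rw [Finset.sum_mul]
            exact Finset.sum_congr rfl fun m _ =>
              Real.mul_rpow (abs_nonneg _) (norm_nonneg _)]
          rw [Real.mul_rpow (Finset.sum_nonneg fun m _ =>
            Real.rpow_nonneg (abs_nonneg _) _) (Real.rpow_nonneg (norm_nonneg _) _),
            ← Real.rpow_mul (norm_nonneg _), mul_one_div, div_self hp0', Real.rpow_one]
  · exact csInf_le hbdd hmem
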